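/- Let n ≥ 2, let x : Fin n → Bool, and let M : Fin n → Fin n satisfy M (M i) = i, M i ≠ i, and x (M i) ≠ x i for all i (the b = 1 case of Boolean Hidden Hypermatching). Then for all j, k : Fin n, P x M (j,k) = 1/n²; that is, the joint distribution of the reduction's sample pair (A, B) is exactly the uniform product distribution on Fin n × Fin n. -/

import Mathlib

/-- Joint law of the pair `(A, B)` in the BHH reduction of Theorem 7.1: a shared index
`r` is uniform on `Fin n`, Alice samples `A` uniformly from `{i | x i = x r}`, and Bob
samples `B` uniformly from `{r, M r}`. -/
noncomputable def redP {n : ℕ} (x : Fin n → Bool) (M : Fin n → Fin n)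
    (jk : Fin n × Fin n) : ℝ :=
  ∑ r : Fin n,
    (1 / (n : ℝ)) *
      (if x r = x jk.1 then
        ((Finset.univ.filter fun i : Fin n => x i = x jk.1).card : ℝ)⁻¹ else 0) *
      (1 / 2) *
      ((if jk.2 = r then (1 : ℝ) else 0) + (if jk.2 = M r then (1 : ℝ) else 0))

/-- In the `b = 1` case of Boolean Hidden Hypermatching (`x (M i) ≠ x i` everywhere),
the reduction's sample pair `(A, B)` is distributed exactly as the uniform product
distribution on `Fin n × Fin n`: `P x M (j,k) = 1/n²` for all `j, k`. -/
theorem redP_uniform_of_bhh_one (n : ℕ) (hn : 2 ≤ n) (x : Fin n → Bool)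
    (M : Fin n → Fin n) (hM : ∀ i, M (M i) = i) (hMne : ∀ i, M i ≠ i)
    (hx : ∀ i, x (M i) ≠ x i) :
    ∀ j k : Fin n, redP x M (j, k) = 1 / (n : ℝ) ^ 2 := by
  intro j k
  have hn0 : (n : ℝ) ≠ 0 := by positivity
  -- cardinality of each color class is n/2
  set S : Finset (Fin n) := Finset.univ.filter fun i : Fin n => x i = x j with hS
  have hcard : (S.card : ℝ) * 2 = (n : ℝ) := by
    have hbij : S.card = (Finset.univ.filter fun i : Fin n => ¬ x i = x j).card := by
      apply Finset.card_bij (fun a _ => M a)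
      · intro a ha
        simp only [hS, Finset.mem_filter, Finset.mem_univ, true_and] at ha ⊢
        rw [← ha]
        exact hx a
      · intro a ha b hb hab
        have := congrArg M hab
        rwa [hM, hM] at this
      · intro b hb
        refine ⟨M b, ?_, hM b⟩
        simp only [hS, Finset.mem_filter, Finset.mem_univ, true_and] at hb ⊢
        have := hx (M b)
        rw [hM] at this
        cases hxb : x (M b) <;> cases hxj : x j <;> simp_all
    have hsum : S.card + (Finset.univ.filter fun i : Fin n => ¬ x i = x j).card = n := by
      rw [hS, Finset.card_filter_add_card_filter_not, Finset.card_univ, Fintype.card_fin]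
    have : S.card * 2 = n := by omega
    exact_mod_cast congrArg (Nat.cast : ℕ → ℝ) this
  have hSne : (S.card : ℝ) ≠ 0 := by
    intro h
    rw [h] at hcard
    simp at hcard
    exact hn0 hcard.symm
  have hkMk : k ≠ M k := fun h => hMne k h.symm
  unfold redP
  rw [Fintype.sum_eq_add k (M k) hkMk]
  · have e1 : (if k = k then (1:ℝ) else 0) = 1 := by simp
    have e2 : (if k = M k then (1:ℝ) else 0) = 0 := by simp [hkMk]
    have e3 : (if k = M (M k) then (1:ℝ) else 0) = 1 := by simp [hM k]
    have hxk := hx k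
    rcases eq_or_ne (x k) (x j) with h | h
    · have h' : ¬ x (M k) = x j := by rw [← h] at *; exact hxk
      simp only [e1, e2, e3, if_pos h, if_neg h']
      rw [← hS]; simp only [↓reduceIte]
      field_simp
      nlinarith [hcard]
    · have h' : x (M k) = x j := by
        cases ha : x (M k) <;> cases hb : x j <;> cases hc : x k <;> simp_all
      simp only [e1, e2, e3, if_neg h, if_pos h']
      rw [← hS]
      field_simp
      nlinarith [hcard]
  · intro c hc
    obtain ⟨hc1, hc2⟩ := hc
    have h1 : ¬ k = c := fun h => hc1 h.symm
    have h2 : ¬ k = M c := by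
      intro h
      apply hc2
      rw [h, hM]
    simp [h1, h2]
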